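/- Let n ≥ 1 and let ζ ∈ ℂ be a primitive (n+1)-th root of unity, and let σ be the ℂ-algebra automorphism of ℂ[u,v] with σ(u) = ζ·u, σ(v) = ζ⁻¹·v. Then the invariant algebra ℂ[u,v]^σ = {p : σ(p) = p} is isomorphic as a ℂ-algebra to the quotient ℂ[x,y,z]/(x·y − z^{n+1}); that is, the quotient surface ℂ²/(ℤ/(n+1)ℤ) is the Kleinian hypersurface singularity of type Aₙ. -/

import Mathlib

open MvPolynomial

noncomputable section AnProof
namespace AnProof

abbrev R2 := MvPolynomial (Fin 2) ℂ
abbrev R3 := MvPolynomial (Fin 3) ℂ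

variable (n : ℕ)

def F : R3 →ₐ[ℂ] R2 := aeval ![X 0 ^ (n+1), X 1 ^ (n+1), X 0 * X 1]

def I : Ideal R3 := Ideal.span {X 0 * X 1 - X 2 ^ (n + 1)}

def sel (d : Fin 2 →₀ ℕ) : R3 :=
  if d 0 ≤ d 1 then X 1 ^ ((d 1 - d 0)/(n+1)) * X 2 ^ (d 0)
  else X 0 ^ ((d 0 - d 1)/(n+1)) * X 2 ^ (d 1)

def S : R2 →ₗ[ℂ] R3 := (basisMonomials (Fin 2) ℂ).constr ℂ (sel n)

lemma S_monomial (d : Fin 2 →₀ ℕ) (r : ℂ) : S n (monomial d r) = r • sel n d := by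
  have h1 : (monomial d r : R2) = r • monomial d 1 := by
    rw [smul_monomial, smul_eq_mul, mul_one]
  have h2 : (monomial d 1 : R2) = basisMonomials (Fin 2) ℂ d := by
    rw [coe_basisMonomials]
  rw [h1, map_smul, h2]
  simp only [S, Module.Basis.constr_basis]

lemma monomial2 (d : Fin 2 →₀ ℕ) : (monomial d 1 : R2) = X 0 ^ (d 0) * X 1 ^ (d 1) := by
  rw [monomial_eq, Finsupp.prod_fintype _ _ (fun i => pow_zero _), Fin.prod_univ_two]
  simp

lemma monomial3 (d : Fin 3 →₀ ℕ) : (monomial d 1 : R3) = X 0 ^ (d 0) * X 1 ^ (d 1) * X 2 ^ (d 2) := by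
  rw [monomial_eq, Finsupp.prod_fintype _ _ (fun i => pow_zero _), Fin.prod_univ_three]
  simp

lemma F_mono (a b c : ℕ) :
    F n (X 0 ^ a * X 1 ^ b * X 2 ^ c) = X 0 ^ ((n+1)*a + c) * X 1 ^ ((n+1)*b + c) := by
  simp only [F, map_mul, map_pow, aeval_X]
  simp only [Matrix.cons_val_zero, Matrix.cons_val_one, Matrix.head_cons,
    Matrix.cons_val_two, Matrix.tail_cons]
  ring

lemma key (a : ℕ) : ∀ b c : ℕ,
    (X 0 : R3) ^ a * X 1 ^ b * X 2 ^ c -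
      (if a ≤ b then X 1 ^ (b - a) * X 2 ^ ((n+1)*a + c)
       else X 0 ^ (a - b) * X 2 ^ ((n+1)*b + c)) ∈ I n := by
  induction a with
  | zero =>
    intro b c
    simp only [Nat.zero_le, if_pos, pow_zero, one_mul, Nat.sub_zero, Nat.mul_zero, Nat.zero_add]
    rw [sub_self]
    exact zero_mem _
  | succ a ih =>
    intro b c
    cases b with
    | zero =>
      rw [if_neg (by omega)]
      simp only [pow_zero, mul_one, Nat.sub_zero, Nat.mul_zero, Nat.zero_add]
      rw [sub_self]
      exact zero_mem _
    | succ b =>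
      have h2 : (if a + 1 ≤ b + 1 then (X 1 : R3) ^ (b + 1 - (a + 1)) * X 2 ^ ((n+1)*(a+1) + c)
          else X 0 ^ (a + 1 - (b + 1)) * X 2 ^ ((n+1)*(b+1) + c)) =
          (if a ≤ b then X 1 ^ (b - a) * X 2 ^ ((n+1)*a + (c + (n+1)))
          else X 0 ^ (a - b) * X 2 ^ ((n+1)*b + (c + (n+1)))) := by
        have e1 : b + 1 - (a + 1) = b - a := by omega
        have e2 : (n+1)*(a+1) + c = (n+1)*a + (c + (n+1)) := by ring
        have e3 : a + 1 - (b + 1) = a - b := by omega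
        have e4 : (n+1)*(b+1) + c = (n+1)*b + (c + (n+1)) := by ring
        rw [e1, e2, e3, e4]
        exact if_congr (by omega) rfl rfl
      rw [h2]
      have h1 : (X 0 : R3) ^ (a+1) * X 1 ^ (b+1) * X 2 ^ c -
          (if a ≤ b then X 1 ^ (b - a) * X 2 ^ ((n+1)*a + (c + (n+1)))
           else X 0 ^ (a - b) * X 2 ^ ((n+1)*b + (c + (n+1)))) =
          (X 0 ^ a * X 1 ^ b * X 2 ^ c) * (X 0 * X 1 - X 2 ^ (n+1)) +
          (X 0 ^ a * X 1 ^ b * X 2 ^ (c + (n+1)) -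
          (if a ≤ b then X 1 ^ (b - a) * X 2 ^ ((n+1)*a + (c + (n+1)))
           else X 0 ^ (a - b) * X 2 ^ ((n+1)*b + (c + (n+1))))) := by
        ring
      rw [h1]
      exact add_mem (Ideal.mul_mem_left _ _ (Ideal.subset_span rfl)) (ih b (c + (n+1)))

lemma S_F_mono (a b c : ℕ) :
    S n (F n (X 0 ^ a * X 1 ^ b * X 2 ^ c)) =
      (if a ≤ b then X 1 ^ (b - a) * X 2 ^ ((n+1)*a + c)
       else X 0 ^ (a - b) * X 2 ^ ((n+1)*b + c)) := by
  rw [F_mono]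
  have hmono : ∀ p q : ℕ, (X 0 : R2) ^ p * X 1 ^ q =
      monomial (Finsupp.single 0 p + Finsupp.single 1 q) 1 := by
    intro p q
    rw [monomial2]
    congr 1 <;> simp [Finsupp.single_apply]
  rw [hmono, S_monomial, one_smul, sel]
  have h0 : ∀ p q : ℕ, ((Finsupp.single (0 : Fin 2) p + Finsupp.single 1 q : Fin 2 →₀ ℕ)) 0 = p := by
    intro p q; simp [Finsupp.single_apply]
  have h1 : ∀ p q : ℕ, ((Finsupp.single (0 : Fin 2) p + Finsupp.single 1 q : Fin 2 →₀ ℕ)) 1 = q := by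
    intro p q; simp [Finsupp.single_apply]
  rw [h0, h1]
  rcases le_or_gt a b with hab | hab
  · obtain ⟨k, rfl⟩ := Nat.exists_eq_add_of_le hab
    have hd1 : (n+1)*(a+k) = (n+1)*a + (n+1)*k := by ring
    have hple : (n+1)*a + c ≤ (n+1)*(a+k) + c := by rw [hd1]; omega
    have hqp : (n+1)*(a+k) + c - ((n+1)*a + c) = (n+1)*k := by rw [hd1]; omega
    have hsub : a + k - a = k := by omega
    rw [if_pos hple, if_pos (by omega : a ≤ a + k), hqp,
      Nat.mul_div_cancel_left _ (Nat.succ_pos n), hsub]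
  · obtain ⟨k, rfl⟩ := Nat.exists_eq_add_of_lt hab
    have hd1 : (n+1)*(b+k+1) = (n+1)*b + (n+1)*k + (n+1)*1 := by ring
    have hd2 : (n+1)*(k+1) = (n+1)*k + (n+1)*1 := by ring
    have hple : ¬ ((n+1)*(b+k+1) + c ≤ (n+1)*b + c) := by rw [hd1]; omega
    have hpq : (n+1)*(b+k+1) + c - ((n+1)*b + c) = (n+1)*(k+1) := by rw [hd1, hd2]; omega
    have hsub : b + k + 1 - b = k + 1 := by omega
    rw [if_neg hple, if_neg (by omega), hpq,
      Nat.mul_div_cancel_left _ (Nat.succ_pos n), hsub]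

/-- `S (F g) ≡ g` modulo the ideal. -/
lemma sub_S_F_mem (g : R3) : g - S n (F n g) ∈ I n := by
  induction g using MvPolynomial.induction_on' with
  | add p q hp hq =>
    have : p + q - S n (F n (p + q)) = (p - S n (F n p)) + (q - S n (F n q)) := by
      rw [map_add, map_add]; ring
    rw [this]; exact add_mem hp hq
  | monomial d r =>
    set a := d 0 with ha; set b := d 1 with hb; set c := d 2 with hc
    have hmono : (monomial d r : R3) = r • (X 0 ^ a * X 1 ^ b * X 2 ^ c) := by
      rw [← monomial3 d, smul_monomial, smul_eq_mul, mul_one]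
    rw [hmono, map_smul, map_smul, ← smul_sub, smul_eq_C_mul]
    refine Ideal.mul_mem_left _ _ ?_
    rw [S_F_mono]
    exact key n a b c

lemma ker_F : RingHom.ker (F n) = I n := by
  apply le_antisymm
  · intro g hg
    rw [RingHom.mem_ker] at hg
    have h := sub_S_F_mem n g
    rwa [hg, map_zero, sub_zero] at h
  · rw [I, Ideal.span_le, Set.singleton_subset_iff, SetLike.mem_coe, RingHom.mem_ker,
      map_sub, map_mul, map_pow]
    simp only [F, aeval_X, Matrix.cons_val_zero, Matrix.cons_val_one, Matrix.head_cons,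
      Matrix.cons_val_two, Matrix.tail_cons]
    ring

section Invariants

variable (ζ : ℂ) (σ : R2 ≃ₐ[ℂ] R2)
  (hu : σ (X 0) = C ζ * X 0) (hv : σ (X 1) = C ζ⁻¹ * X 1)

include hu hv in
lemma coeff_sigma (p : R2) (d : Fin 2 →₀ ℕ) :
    coeff d (σ p) = ζ ^ (d 0) * ζ⁻¹ ^ (d 1) * coeff d p := by
  induction p using MvPolynomial.induction_on' with
  | add p q hp hq =>
    rw [map_add, coeff_add, coeff_add, hp, hq]; ring
  | monomial e r =>
    have hσ : σ (monomial e r) = monomial e (ζ ^ (e 0) * ζ⁻¹ ^ (e 1) * r) := by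
      have h1 : (monomial e r : R2) = C r * (X 0 ^ (e 0) * X 1 ^ (e 1)) := by
        rw [← monomial2, C_mul_monomial, mul_one]
      rw [h1, map_mul, map_mul, map_pow, map_pow, hu, hv]
      have hC : σ (C r) = C r := by
        have := σ.commutes r
        rwa [MvPolynomial.algebraMap_eq] at this
      rw [hC, mul_pow, mul_pow, ← C_pow, ← C_pow]
      have expand : (C r : R2) * (C (ζ ^ e 0) * X 0 ^ e 0 * (C (ζ⁻¹ ^ e 1) * X 1 ^ e 1)) =
          C (ζ ^ e 0 * ζ⁻¹ ^ e 1 * r) * (X 0 ^ e 0 * X 1 ^ e 1) := by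
        rw [C_mul, C_mul]; ring
      rw [expand, ← monomial2, C_mul_monomial, mul_one]
    rw [hσ, coeff_monomial, coeff_monomial]
    split_ifs with h
    · subst h; ring
    · ring

include hu hv in
lemma support_pow_eq {p : R2} (hp : σ p = p) {d : Fin 2 →₀ ℕ} (hd : d ∈ p.support)
    (hζ0 : ζ ≠ 0) : ζ ^ (d 0) = ζ ^ (d 1) := by
  have h := coeff_sigma ζ σ hu hv p d
  rw [hp] at h
  have hc : coeff d p ≠ 0 := mem_support_iff.mp hd
  have h1 : ζ ^ (d 0) * ζ⁻¹ ^ (d 1) = 1 := by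
    have := mul_right_cancel₀ hc (h.symm.trans (one_mul (coeff d p)).symm)
    exact this
  rw [inv_pow] at h1
  field_simp at h1
  exact h1

end Invariants

lemma F_sel {ζ : ℂ} (hζ : IsPrimitiveRoot ζ (n+1)) (d : Fin 2 →₀ ℕ)
    (hd : ζ ^ (d 0) = ζ ^ (d 1)) : F n (sel n d) = monomial d 1 := by
  have hζ0 : ζ ≠ 0 := hζ.ne_zero (Nat.succ_ne_zero n)
  rw [monomial2, sel]
  rcases le_or_gt (d 0) (d 1) with h | h
  · have hdvd : (n+1) ∣ (d 1 - d 0) := by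
      apply hζ.dvd_of_pow_eq_one
      rw [pow_sub₀ _ hζ0 h, hd, mul_inv_cancel₀ (pow_ne_zero _ hζ0)]
    rw [if_pos h, map_mul, map_pow, map_pow]
    simp only [F, aeval_X, Matrix.cons_val_zero, Matrix.cons_val_one, Matrix.head_cons,
      Matrix.cons_val_two, Matrix.tail_cons]
    rw [← pow_mul, Nat.mul_div_cancel' hdvd, mul_pow, ← mul_assoc]
    rw [mul_comm ((X 1 : R2) ^ (d 1 - d 0)) (X 0 ^ (d 0)), mul_assoc, ← pow_add,
      Nat.sub_add_cancel h]
  · have hdvd : (n+1) ∣ (d 0 - d 1) := by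
      apply hζ.dvd_of_pow_eq_one
      rw [pow_sub₀ _ hζ0 h.le, ← hd, mul_inv_cancel₀ (pow_ne_zero _ hζ0)]
    rw [if_neg (by omega), map_mul, map_pow, map_pow]
    simp only [F, aeval_X, Matrix.cons_val_zero, Matrix.cons_val_one, Matrix.head_cons,
      Matrix.cons_val_two, Matrix.tail_cons]
    rw [← pow_mul, Nat.mul_div_cancel' hdvd, mul_pow, ← mul_assoc, ← pow_add,
      Nat.sub_add_cancel h.le]

lemma F_S_invariant {ζ : ℂ} (hζ : IsPrimitiveRoot ζ (n+1)) (σ : R2 ≃ₐ[ℂ] R2)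
    (hu : σ (X 0) = C ζ * X 0) (hv : σ (X 1) = C ζ⁻¹ * X 1)
    {p : R2} (hp : σ p = p) : F n (S n p) = p := by
  have hζ0 : ζ ≠ 0 := hζ.ne_zero (Nat.succ_ne_zero n)
  conv_rhs => rw [p.as_sum]
  nth_rewrite 1 [p.as_sum]
  rw [map_sum, map_sum]
  refine Finset.sum_congr rfl fun d hd => ?_
  rw [S_monomial, map_smul, F_sel n hζ d (support_pow_eq ζ σ hu hv hp hd hζ0),
    smul_monomial, smul_eq_mul, mul_one]

lemma sigma_F {ζ : ℂ} (hζ : IsPrimitiveRoot ζ (n+1)) (σ : R2 ≃ₐ[ℂ] R2)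
    (hu : σ (X 0) = C ζ * X 0) (hv : σ (X 1) = C ζ⁻¹ * X 1) (g : R3) :
    σ (F n g) = F n g := by
  have hζ0 : ζ ≠ 0 := hζ.ne_zero (Nat.succ_ne_zero n)
  have hpow : ζ ^ (n+1) = 1 := hζ.pow_eq_one
  have h0 : σ ((X 0 : R2) ^ (n+1)) = X 0 ^ (n+1) := by
    rw [map_pow, hu, mul_pow, ← C_pow, hpow, C_1, one_mul]
  have h1 : σ ((X 1 : R2) ^ (n+1)) = X 1 ^ (n+1) := by
    rw [map_pow, hv, mul_pow, ← C_pow, inv_pow, hpow, inv_one, C_1, one_mul]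
  have h2 : σ ((X 0 : R2) * X 1) = X 0 * X 1 := by
    rw [map_mul, hu, hv,
      show ((C ζ * X 0) * (C ζ⁻¹ * X 1) : R2) = (C ζ * C ζ⁻¹) * (X 0 * X 1) by ring,
      ← C_mul, mul_inv_cancel₀ hζ0, C_1, one_mul]
  have : (σ.toAlgHom.comp (F n)) = F n := by
    apply MvPolynomial.algHom_ext
    intro i
    fin_cases i <;> simp [F, h0, h1, h2]
  exact AlgHom.congr_fun this g

end AnProof
end AnProof

open AnProof in
/-- Let `ζ` be a primitive `(n+1)`-st root of unity and `σ` the `ℂ`-algebra automorphism of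
`ℂ[u, v]` with `σ(u) = ζu`, `σ(v) = ζ⁻¹v`. The invariant algebra `ℂ[u, v]^σ` is isomorphic
as a `ℂ`-algebra to `ℂ[x, y, z]/(x·y − z^(n+1))`: the quotient `ℂ²/(ℤ/(n+1)ℤ)` is the
Kleinian hypersurface singularity of type `Aₙ`. -/
theorem cyclic_invariants_iso_An (n : ℕ) (hn : 1 ≤ n)
    (ζ : ℂ) (hζ : IsPrimitiveRoot ζ (n + 1))
    (σ : MvPolynomial (Fin 2) ℂ ≃ₐ[ℂ] MvPolynomial (Fin 2) ℂ)
    (hu : σ (X 0) = C ζ * X 0) (hv : σ (X 1) = C ζ⁻¹ * X 1) :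
    Nonempty
      ((AlgHom.equalizer σ.toAlgHom (AlgHom.id ℂ (MvPolynomial (Fin 2) ℂ))) ≃ₐ[ℂ]
        (MvPolynomial (Fin 3) ℂ ⧸
          Ideal.span ({X 0 * X 1 - X 2 ^ (n + 1)} : Set (MvPolynomial (Fin 3) ℂ)))) := by
  classical
  set A := AlgHom.equalizer σ.toAlgHom (AlgHom.id ℂ (MvPolynomial (Fin 2) ℂ)) with hA
  have hrange : ∀ g, AnProof.F n g ∈ A := fun g => by
    rw [hA, AlgHom.mem_equalizer]
    simpa using AnProof.sigma_F n hζ σ hu hv g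
  set F' := (AnProof.F n).codRestrict A hrange with hF'
  have hsurj : Function.Surjective F' := by
    rintro ⟨p, hp⟩
    have hp' : σ p = p := by simpa [hA, AlgHom.mem_equalizer] using hp
    refine ⟨AnProof.S n p, Subtype.ext ?_⟩
    rw [hF', AlgHom.coe_codRestrict]
    exact AnProof.F_S_invariant n hζ σ hu hv hp'
  have hker : RingHom.ker F' = AnProof.I n := by
    rw [← AnProof.ker_F n]
    ext g
    simp only [RingHom.mem_ker]
    constructor
    · intro h
      have := congrArg Subtype.val h
      rwa [hF', AlgHom.coe_codRestrict, ZeroMemClass.coe_zero] at this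
    · intro h
      exact Subtype.ext (by rwa [hF', AlgHom.coe_codRestrict, ZeroMemClass.coe_zero])
  have e := Ideal.quotientKerAlgEquivOfSurjective hsurj
  have e := (Ideal.quotientEquivAlgOfEq ℂ hker).symm.trans e
  exact ⟨e.symm⟩
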